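/- Let U = (P ∪ Q, Ẽ) be an undirected bipartite graph and let (G,σ) be the 2-colored digraph constructed from U as follows: V(G) = P ∪ Q ∪ R ∪ {b} ∪ {w} where R = {r1,…,r|Q|} is a copy of Q = {q1,…,q|Q|}; all vertices of P, all vertices of R, and b are colored black, and all vertices of Q and w are colored white; the arcs are (q_i,r_i) and (r_i,q_i) for 1 ≤ i ≤ |Q|, (p_i,w) for every p_i ∈ P, (w,b) and (b,w), and (p,q) for every edge {p,q} ∈ Ẽ. Let F ⊆ P×Q and put F̃ = {{p,q} | (p,q) ∈ F}. Then (G+F,σ) is a best match graph if and only if U' = (P ∪ Q, Ẽ ∪ F̃) is a chain graph. -/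

import Mathlib

/-- A rooted (phylogenetic) tree on leaf set `V`, encoded by its hierarchy of
clusters `L(T(v))`, `v ∈ V(T)`: a rooted tree on leaf set `V` corresponds
exactly to a family of nonempty, pairwise compatible subsets of `V` containing
all singletons and `V` itself.  Together with a coloring `σ : V → M` this is a
leaf-colored tree. -/
structure PhyloTree (V : Type) where
  clusters : Set (Set V)
  compat : ∀ p ∈ clusters, ∀ q ∈ clusters, p ⊆ q ∨ q ⊆ p ∨ p ∩ q = ∅
  singleton_mem : ∀ v : V, {v} ∈ clusters
  univ_mem : Set.univ ∈ clusters
  nonempty_mem : ∀ p ∈ clusters, p.Nonempty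

namespace PhyloTree

variable {V M : Type}

/-- The cluster `L(T(lca(x,y)))` of the last common ancestor of `x` and `y`;
for inner vertices `u,v` of a tree one has `u ⪯_T v ↔ L(T(u)) ⊆ L(T(v))`. -/
def lcaSet (T : PhyloTree V) (x y : V) : Set V :=
  ⋂₀ {p : Set V | p ∈ T.clusters ∧ x ∈ p ∧ y ∈ p}

/-- `T` displays the triple `xy|z`, i.e. `lca(x,y) ≺ lca(x,z) = lca(y,z)`. -/
def Displays (T : PhyloTree V) (x y z : V) : Prop :=
  T.lcaSet x y ⊂ T.lcaSet x z ∧ T.lcaSet x z = T.lcaSet y z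

/-- `y` is a best match of `x` in the leaf-colored tree `(T,σ)`. -/
def BestMatch (T : PhyloTree V) (σ : V → M) (x y : V) : Prop :=
  σ x ≠ σ y ∧ ∀ y' : V, σ y' = σ y → T.lcaSet x y ⊆ T.lcaSet x y'

end PhyloTree

variable {V M : Type}

/-- `(T,σ)` explains `(G,σ)`, i.e. `(G,σ) = G(T,σ)`. -/
def Explains (T : PhyloTree V) (σ : V → M) (G : V → V → Prop) : Prop :=
  ∀ x y : V, G x y ↔ T.BestMatch σ x y

/-- `(G,σ)` is a best match graph. -/
def IsBMG (G : V → V → Prop) (σ : V → M) : Prop :=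
  ∃ T : PhyloTree V, Explains T σ G

/-- The triple `xy|y'` is informative for `(G,σ)`. -/
def InformativeTriple (G : V → V → Prop) (σ : V → M) (x y y' : V) : Prop :=
  x ≠ y ∧ x ≠ y' ∧ y ≠ y' ∧ σ x ≠ σ y ∧ σ y = σ y' ∧ G x y ∧ ¬ G x y'

/-- The triple `xy|y'` is forbidden for `(G,σ)`. -/
def ForbiddenTriple (G : V → V → Prop) (σ : V → M) (x y y' : V) : Prop :=
  x ≠ y ∧ x ≠ y' ∧ y ≠ y' ∧ σ x ≠ σ y ∧ σ y = σ y' ∧ G x y ∧ G x y'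

/-- `(G,σ)` is sf-colored: `σ` is proper and every vertex has an out-neighbor
of every color present in the graph other than its own. -/
def SfColored (G : V → V → Prop) (σ : V → M) : Prop :=
  (∀ x y : V, G x y → σ x ≠ σ y) ∧
  ∀ (x : V) (s : M), (∃ v : V, σ v = s) → s ≠ σ x → ∃ y : V, σ y = s ∧ G x y

/-- Vertex set of the graph constructed in the reduction from Chain Graph
Completion: `P ∪ Q ∪ R ∪ {b} ∪ {w}`, where `R` is a copy of `Q`, the vertex
`b = Sum.inr (Sum.inr (Sum.inr true))` and `w = Sum.inr (Sum.inr (Sum.inr false))`. -/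
abbrev CGCVert (P Q : Type) : Type := P ⊕ Q ⊕ Q ⊕ Bool

/-- The coloring: vertices of `P`, of `R` and `b` are black (`true`); vertices
of `Q` and `w` are white (`false`). -/
def cgcColor {P Q : Type} : CGCVert P Q → Bool
  | Sum.inl _ => true
  | Sum.inr (Sum.inl _) => false
  | Sum.inr (Sum.inr (Sum.inl _)) => true
  | Sum.inr (Sum.inr (Sum.inr c)) => c

/-- Arcs of the reduction graph constructed from the bipartite graph with edge
relation `E0` between `P` and `Q`: `(q_i,r_i)`, `(r_i,q_i)`, `(p,w)` for every
`p ∈ P`, `(w,b)`, `(b,w)`, and `(p,q)` for every edge `{p,q}` of `U`. -/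
def cgcArcs {P Q : Type} (E0 : P → Q → Prop) : CGCVert P Q → CGCVert P Q → Prop
  | Sum.inl p, Sum.inr (Sum.inl q) => E0 p q
  | Sum.inl _, Sum.inr (Sum.inr (Sum.inr c)) => c = false
  | Sum.inr (Sum.inl q), Sum.inr (Sum.inr (Sum.inl q')) => q = q'
  | Sum.inr (Sum.inr (Sum.inl q')), Sum.inr (Sum.inl q) => q' = q
  | Sum.inr (Sum.inr (Sum.inr c)), Sum.inr (Sum.inr (Sum.inr c')) => c ≠ c'
  | _, _ => False

/-- The bipartite graph on `P ∪ Q` with edge relation `E0` is a chain graph: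
there is a linear order on `P` along which the neighborhoods are nested. -/
def IsChainGraph {P Q : Type} (E0 : P → Q → Prop) : Prop :=
  ∃ l : LinearOrder P, ∀ u v : P, l.le u v → ∀ q : Q, E0 u q → E0 v q

namespace CGCProof

open PhyloTree

variable {V M : Type}

lemma mem_lcaSet_left (T : PhyloTree V) (x y : V) : x ∈ T.lcaSet x y :=
  Set.mem_sInter.2 fun _ hs => hs.2.1

lemma mem_lcaSet_right (T : PhyloTree V) (x y : V) : y ∈ T.lcaSet x y :=
  Set.mem_sInter.2 fun _ hs => hs.2.2

lemma lcaSet_subset (T : PhyloTree V) {c : Set V} {x y : V}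
    (hc : c ∈ T.clusters) (hx : x ∈ c) (hy : y ∈ c) : T.lcaSet x y ⊆ c :=
  Set.sInter_subset_of_mem ⟨hc, hx, hy⟩

lemma subset_lcaSet (T : PhyloTree V) {s : Set V} {x y : V}
    (h : ∀ c ∈ T.clusters, x ∈ c → y ∈ c → s ⊆ c) : s ⊆ T.lcaSet x y :=
  Set.subset_sInter fun _ hc => h _ hc.1 hc.2.1 hc.2.2

lemma lcaSet_mem [Finite V] (T : PhyloTree V) (x y : V) :
    T.lcaSet x y ∈ T.clusters := by
  classical
  set S : Set (Set V) := {p | p ∈ T.clusters ∧ x ∈ p ∧ y ∈ p} with hSdef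
  have hfin : S.Finite := Set.toFinite S
  have hne : S.Nonempty := ⟨Set.univ, T.univ_mem, trivial, trivial⟩
  obtain ⟨a, haS, hmin⟩ : ∃ a ∈ S, ∀ a' ∈ S, id a' ≤ id a → id a = id a' := by
    obtain ⟨a, haS, hm⟩ := hfin.exists_minimalFor id S hne
    exact ⟨a, haS, fun a' ha' h => le_antisymm (hm ha' h) h⟩
  have hleast : ∀ b ∈ S, a ⊆ b := by
    intro b hb
    rcases T.compat a haS.1 b hb.1 with h | h | h
    · exact h
    · exact le_of_eq (hmin b hb h)
    · exact absurd h (by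
        intro hemp
        have : x ∈ a ∩ b := ⟨haS.2.1, hb.2.1⟩
        rw [hemp] at this; exact this)
  have heq : T.lcaSet x y = a :=
    le_antisymm (Set.sInter_subset_of_mem haS) (Set.subset_sInter hleast)
  rw [heq]; exact haS.1

lemma bm_of_min (T : PhyloTree V) (σ : V → M) {x y : V} {c : Set V}
    (hσ : σ x ≠ σ y) (hc : c ∈ T.clusters) (hx : x ∈ c) (hy : y ∈ c)
    (hmin : ∀ y' : V, σ y' = σ y → c ⊆ T.lcaSet x y') :
    T.BestMatch σ x y :=
  ⟨hσ, fun y' h => (lcaSet_subset T hc hx hy).trans (hmin y' h)⟩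

lemma not_bm (T : PhyloTree V) (σ : V → M) {x y : V} (y' : V)
    (hcol : σ y' = σ y) (hy : y ∉ T.lcaSet x y') : ¬ T.BestMatch σ x y :=
  fun h => hy (h.2 y' hcol (mem_lcaSet_right T x y))

section Construction

variable {P Q : Type}

/-- The cluster of the tree vertex `v_i` in the CGC reduction tree. -/
def bigC (l : LinearOrder P) (E1 : P → Q → Prop) (p : P) : Set (CGCVert P Q) :=
  fun v => match v with
  | Sum.inl p' => l.le p' p
  | Sum.inr (Sum.inl q) => E1 p q
  | Sum.inr (Sum.inr (Sum.inl q)) => E1 p q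
  | Sum.inr (Sum.inr (Sum.inr _)) => True

def pairQR (q : Q) : Set (CGCVert P Q) :=
  {Sum.inr (Sum.inl q), Sum.inr (Sum.inr (Sum.inl q))}

def pairBW : Set (CGCVert P Q) :=
  {Sum.inr (Sum.inr (Sum.inr true)), Sum.inr (Sum.inr (Sum.inr false))}

def chainClusters (l : LinearOrder P) (E1 : P → Q → Prop) :
    Set (Set (CGCVert P Q)) :=
  {s | (∃ v, s = {v}) ∨ s = Set.univ ∨ (∃ q, s = pairQR q) ∨ s = pairBW ∨
    ∃ p, s = bigC l E1 p}

variable {l : LinearOrder P} {E1 : P → Q → Prop}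

lemma bigC_mono (hmono : ∀ u v : P, l.le u v → ∀ q : Q, E1 u q → E1 v q)
    {p p' : P} (h : l.le p p') : bigC l E1 p ⊆ bigC l E1 p' := by
  intro v hv
  rcases v with p'' | q | q | c
  · exact l.le_trans _ _ _ hv h
  · exact hmono p p' h q hv
  · exact hmono p p' h q hv
  · trivial

lemma mem_bigC_inl {p p' : P} : Sum.inl p' ∈ bigC l E1 p ↔ l.le p' p := Iff.rfl
lemma mem_bigC_q {p : P} {q : Q} :
    (Sum.inr (Sum.inl q) : CGCVert P Q) ∈ bigC l E1 p ↔ E1 p q := Iff.rfl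
lemma mem_bigC_r {p : P} {q : Q} :
    (Sum.inr (Sum.inr (Sum.inl q)) : CGCVert P Q) ∈ bigC l E1 p ↔ E1 p q := Iff.rfl
lemma mem_bigC_bool {p : P} {c : Bool} :
    (Sum.inr (Sum.inr (Sum.inr c)) : CGCVert P Q) ∈ bigC l E1 p := trivial

lemma pairBW_subset_bigC {p : P} : pairBW ⊆ bigC l E1 p := by
  rintro v (rfl | rfl) <;> trivial

lemma singleton_compat (s : Set (CGCVert P Q)) (v : CGCVert P Q) :
    {v} ⊆ s ∨ ({v} : Set (CGCVert P Q)) ∩ s = ∅ := by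
  classical
  by_cases h : v ∈ s
  · exact Or.inl (Set.singleton_subset_iff.2 h)
  · right
    apply Set.eq_empty_iff_forall_notMem.2
    rintro x ⟨rfl, hx⟩
    exact h hx

/-- The tree explaining the CGC reduction graph of a chain graph. -/
def chainTree (l : LinearOrder P) (E1 : P → Q → Prop)
    (hmono : ∀ u v : P, l.le u v → ∀ q : Q, E1 u q → E1 v q) :
    PhyloTree (CGCVert P Q) where
  clusters := chainClusters l E1
  compat := by
    classical
    rintro s hs t ht
    rcases hs with ⟨v, rfl⟩ | rfl | ⟨q, rfl⟩ | rfl | ⟨p, rfl⟩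
    · rcases singleton_compat t v with h | h
      · exact Or.inl h
      · exact Or.inr (Or.inr h)
    all_goals rcases ht with ⟨v, rfl⟩ | rfl | ⟨q', rfl⟩ | rfl | ⟨p', rfl⟩
    -- s = univ
    · rcases singleton_compat Set.univ v with h | h
      · exact Or.inr (Or.inl h)
      · exact Or.inr (Or.inr (by rw [Set.inter_comm]; exact h))
    · exact Or.inl subset_rfl
    · exact Or.inr (Or.inl (Set.subset_univ _))
    · exact Or.inr (Or.inl (Set.subset_univ _))
    · exact Or.inr (Or.inl (Set.subset_univ _))
    -- s = pairQR q
    · rcases singleton_compat (pairQR q) v with h | h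
      · exact Or.inr (Or.inl h)
      · exact Or.inr (Or.inr (by rw [Set.inter_comm]; exact h))
    · exact Or.inl (Set.subset_univ _)
    · by_cases h : q = q'
      · exact Or.inl (by rw [h])
      · refine Or.inr (Or.inr (Set.eq_empty_iff_forall_notMem.2 ?_))
        rintro v ⟨h1, h2⟩
        rcases h1 with rfl | rfl <;> rcases h2 with h2 | h2 <;> simp_all [pairQR]
    · refine Or.inr (Or.inr (Set.eq_empty_iff_forall_notMem.2 ?_))
      rintro v ⟨h1, h2⟩
      rcases h1 with rfl | rfl <;> rcases h2 with h2 | h2 <;> simp [pairBW] at h2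
    · by_cases h : E1 p' q
      · exact Or.inl (by rintro v (rfl | rfl) <;> exact h)
      · refine Or.inr (Or.inr (Set.eq_empty_iff_forall_notMem.2 ?_))
        rintro v ⟨h1, h2⟩
        rcases h1 with rfl | rfl <;> exact h h2
    -- s = pairBW
    · rcases singleton_compat pairBW v with h | h
      · exact Or.inr (Or.inl h)
      · exact Or.inr (Or.inr (by rw [Set.inter_comm]; exact h))
    · exact Or.inl (Set.subset_univ _)
    · refine Or.inr (Or.inr (Set.eq_empty_iff_forall_notMem.2 ?_))
      rintro v ⟨h1, h2⟩
      rcases h2 with rfl | rfl <;> rcases h1 with h1 | h1 <;> simp [pairBW] at h1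
    · exact Or.inl subset_rfl
    · exact Or.inl pairBW_subset_bigC
    -- s = bigC p
    · rcases singleton_compat (bigC l E1 p) v with h | h
      · exact Or.inr (Or.inl h)
      · exact Or.inr (Or.inr (by rw [Set.inter_comm]; exact h))
    · exact Or.inl (Set.subset_univ _)
    · by_cases h : E1 p q'
      · exact Or.inr (Or.inl (by rintro v (rfl | rfl) <;> exact h))
      · refine Or.inr (Or.inr (Set.eq_empty_iff_forall_notMem.2 ?_))
        rintro v ⟨h1, h2⟩
        rcases h2 with rfl | rfl <;> exact h h1
    · exact Or.inr (Or.inl pairBW_subset_bigC)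
    · rcases l.le_total p p' with h | h
      · exact Or.inl (bigC_mono hmono h)
      · exact Or.inr (Or.inl (bigC_mono hmono h))
  singleton_mem := fun v => Or.inl ⟨v, rfl⟩
  univ_mem := Or.inr (Or.inl rfl)
  nonempty_mem := by
    rintro s (⟨v, rfl⟩ | rfl | ⟨q, rfl⟩ | rfl | ⟨p, rfl⟩)
    · exact ⟨v, rfl⟩
    · exact ⟨Sum.inr (Sum.inr (Sum.inr true)), trivial⟩
    · exact ⟨Sum.inr (Sum.inl q), Or.inl rfl⟩
    · exact ⟨Sum.inr (Sum.inr (Sum.inr true)), Or.inl rfl⟩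
    · exact ⟨Sum.inr (Sum.inr (Sum.inr true)), trivial⟩

lemma min_p (hmono : ∀ u v : P, l.le u v → ∀ q : Q, E1 u q → E1 v q) (p : P) (s : Set (CGCVert P Q)) (hs : s ∈ chainClusters l E1)
    (hp : Sum.inl p ∈ s) (y : CGCVert P Q) (hy : y ∈ s) (hne : y ≠ Sum.inl p) :
    bigC l E1 p ⊆ s := by
  rcases hs with ⟨v, rfl⟩ | rfl | ⟨q, rfl⟩ | rfl | ⟨p', rfl⟩
  · rcases hp with rfl; rcases hy with rfl; exact absurd rfl hne
  · exact Set.subset_univ _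
  · rcases hp with h | h <;> simp [pairQR] at h
  · rcases hp with h | h <;> simp [pairBW] at h
  · exact bigC_mono hmono hp

lemma min_q (q : Q) (s : Set (CGCVert P Q)) (hs : s ∈ chainClusters l E1)
    (hq : Sum.inr (Sum.inl q) ∈ s) (y : CGCVert P Q) (hy : y ∈ s)
    (hne : y ≠ Sum.inr (Sum.inl q)) : pairQR q ⊆ s := by
  rcases hs with ⟨v, rfl⟩ | rfl | ⟨q', rfl⟩ | rfl | ⟨p', rfl⟩
  · rcases hp : hq with rfl; rcases hy with rfl; exact absurd rfl hne
  · exact Set.subset_univ _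
  · rcases hq with h | h
    · obtain rfl : q = q' := by simpa [pairQR] using h
      exact subset_rfl
    · simp [pairQR] at h
  · rcases hq with h | h <;> simp [pairBW] at h
  · have hE : E1 p' q := hq
    rintro v (rfl | rfl) <;> exact hE

lemma min_r (q : Q) (s : Set (CGCVert P Q)) (hs : s ∈ chainClusters l E1)
    (hq : Sum.inr (Sum.inr (Sum.inl q)) ∈ s) (y : CGCVert P Q) (hy : y ∈ s)
    (hne : y ≠ Sum.inr (Sum.inr (Sum.inl q))) : pairQR q ⊆ s := by
  rcases hs with ⟨v, rfl⟩ | rfl | ⟨q', rfl⟩ | rfl | ⟨p', rfl⟩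
  · rcases hq with rfl; rcases hy with rfl; exact absurd rfl hne
  · exact Set.subset_univ _
  · rcases hq with h | h
    · simp [pairQR] at h
    · obtain rfl : q = q' := by simpa [pairQR] using h
      exact subset_rfl
  · rcases hq with h | h <;> simp [pairBW] at h
  · have hE : E1 p' q := hq
    rintro v (rfl | rfl) <;> exact hE

lemma min_bw (c : Bool) (s : Set (CGCVert P Q)) (hs : s ∈ chainClusters l E1)
    (hc : Sum.inr (Sum.inr (Sum.inr c)) ∈ s) (y : CGCVert P Q) (hy : y ∈ s)
    (hne : y ≠ Sum.inr (Sum.inr (Sum.inr c))) : pairBW ⊆ s := by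
  rcases hs with ⟨v, rfl⟩ | rfl | ⟨q', rfl⟩ | rfl | ⟨p', rfl⟩
  · rcases hc with rfl; rcases hy with rfl; exact absurd rfl hne
  · exact Set.subset_univ _
  · rcases hc with h | h <;> simp [pairQR] at h
  · exact subset_rfl
  · exact pairBW_subset_bigC

end Construction

end CGCProof
namespace CGCProof

open PhyloTree

lemma chain_explains {P Q : Type} (E0 F : P → Q → Prop) (l : LinearOrder P)
    (hmono : ∀ u v : P, l.le u v → ∀ q : Q,
      (E0 u q ∨ F u q) → (E0 v q ∨ F v q)) :
    Explains (chainTree l (fun p q => E0 p q ∨ F p q) hmono) cgcColor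
      (fun u v => cgcArcs E0 u v ∨
        (∃ (p : P) (q : Q), F p q ∧ u = Sum.inl p ∧ v = Sum.inr (Sum.inl q))) := by
  classical
  set E1 : P → Q → Prop := fun p q => E0 p q ∨ F p q with hE1
  set T := chainTree l E1 hmono with hTdef
  have hclP : ∀ p : P, bigC l E1 p ∈ T.clusters :=
    fun p => Or.inr (Or.inr (Or.inr (Or.inr ⟨p, rfl⟩)))
  have hclQ : ∀ q : Q, (pairQR q : Set (CGCVert P Q)) ∈ T.clusters :=
    fun q => Or.inr (Or.inr (Or.inl ⟨q, rfl⟩))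
  have hclBW : (pairBW : Set (CGCVert P Q)) ∈ T.clusters :=
    Or.inr (Or.inr (Or.inr (Or.inl rfl)))
  -- positive best-match facts
  have hbmP : ∀ (p : P) (y : CGCVert P Q), cgcColor y = false → y ∈ bigC l E1 p →
      T.BestMatch cgcColor (Sum.inl p) y := by
    intro p y hy hmem
    refine bm_of_min T cgcColor (by intro h; rw [hy] at h; exact Bool.noConfusion h) (hclP p) (l.le_refl p) hmem ?_
    intro y' hy'
    refine subset_lcaSet T fun c hc hxc hyc => min_p hmono p c hc hxc y' hyc ?_
    rintro rfl; rw [hy] at hy'; exact Bool.noConfusion hy'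
  have hbmQ : ∀ (q : Q) (y : CGCVert P Q), cgcColor y = true → y ∈ pairQR q →
      T.BestMatch cgcColor (Sum.inr (Sum.inl q)) y := by
    intro q y hy hmem
    refine bm_of_min T cgcColor (by intro h; rw [hy] at h; exact Bool.noConfusion h) (hclQ q) (Or.inl rfl) hmem ?_
    intro y' hy'
    refine subset_lcaSet T fun c hc hxc hyc => min_q q c hc hxc y' hyc ?_
    rintro rfl; rw [hy] at hy'; exact Bool.noConfusion hy'
  have hbmR : ∀ (q : Q) (y : CGCVert P Q), cgcColor y = false → y ∈ pairQR q →
      T.BestMatch cgcColor (Sum.inr (Sum.inr (Sum.inl q))) y := by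
    intro q y hy hmem
    refine bm_of_min T cgcColor (by intro h; rw [hy] at h; exact Bool.noConfusion h) (hclQ q) (Or.inr rfl) hmem ?_
    intro y' hy'
    refine subset_lcaSet T fun c hc hxc hyc => min_r q c hc hxc y' hyc ?_
    rintro rfl; rw [hy] at hy'; exact Bool.noConfusion hy'
  have hbmBW : ∀ c c' : Bool, c ≠ c' →
      T.BestMatch cgcColor (Sum.inr (Sum.inr (Sum.inr c)))
        (Sum.inr (Sum.inr (Sum.inr c'))) := by
    intro c c' hcc
    have hx : (Sum.inr (Sum.inr (Sum.inr c)) : CGCVert P Q) ∈ pairBW := by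
      cases c
      · exact Or.inr rfl
      · exact Or.inl rfl
    have hyy : (Sum.inr (Sum.inr (Sum.inr c')) : CGCVert P Q) ∈ pairBW := by
      cases c'
      · exact Or.inr rfl
      · exact Or.inl rfl
    refine bm_of_min T cgcColor hcc hclBW hx hyy ?_
    intro y' hy'
    refine subset_lcaSet T fun s hs hxc hyc => min_bw c s hs hxc y' hyc ?_
    rintro rfl; exact hcc hy'
  -- negative best-match facts
  have hnbmP : ∀ (p : P) (y : CGCVert P Q), cgcColor y = false → y ∉ bigC l E1 p →
      ¬ T.BestMatch cgcColor (Sum.inl p) y := by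
    intro p y hy hmem
    refine not_bm T cgcColor (Sum.inr (Sum.inr (Sum.inr false))) hy.symm ?_
    intro hmem'
    exact hmem (lcaSet_subset T (hclP p) (l.le_refl p) mem_bigC_bool hmem')
  have hnbmQ : ∀ (q : Q) (y : CGCVert P Q), cgcColor y = true → y ∉ pairQR q →
      ¬ T.BestMatch cgcColor (Sum.inr (Sum.inl q)) y := by
    intro q y hy hmem
    refine not_bm T cgcColor (Sum.inr (Sum.inr (Sum.inl q))) hy.symm ?_
    intro hmem'
    exact hmem (lcaSet_subset T (hclQ q) (Or.inl rfl) (Or.inr rfl) hmem')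
  have hnbmR : ∀ (q : Q) (y : CGCVert P Q), cgcColor y = false → y ∉ pairQR q →
      ¬ T.BestMatch cgcColor (Sum.inr (Sum.inr (Sum.inl q))) y := by
    intro q y hy hmem
    refine not_bm T cgcColor (Sum.inr (Sum.inl q)) hy.symm ?_
    intro hmem'
    exact hmem (lcaSet_subset T (hclQ q) (Or.inr rfl) (Or.inl rfl) hmem')
  have hnbmB : ∀ (y : CGCVert P Q), cgcColor y = false → y ∉ pairBW →
      ¬ T.BestMatch cgcColor (Sum.inr (Sum.inr (Sum.inr true))) y := by
    intro y hy hmem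
    refine not_bm T cgcColor (Sum.inr (Sum.inr (Sum.inr false))) hy.symm ?_
    intro hmem'
    exact hmem (lcaSet_subset T hclBW (Or.inl rfl) (Or.inr rfl) hmem')
  have hnbmW : ∀ (y : CGCVert P Q), cgcColor y = true → y ∉ pairBW →
      ¬ T.BestMatch cgcColor (Sum.inr (Sum.inr (Sum.inr false))) y := by
    intro y hy hmem
    refine not_bm T cgcColor (Sum.inr (Sum.inr (Sum.inr true))) hy.symm ?_
    intro hmem'
    exact hmem (lcaSet_subset T hclBW (Or.inr rfl) (Or.inl rfl) hmem')
  intro x y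
  rcases x with p | q | q | c <;> rcases y with p' | q' | q' | c'
  -- (p, p')
  · refine iff_of_false ?_ (fun h => h.1 rfl)
    rintro (h | ⟨p0, q0, -, h1, h2⟩)
    · exact (h : False).elim
    · simp at h2
  -- (p, q')
  · constructor
    · rintro (h | ⟨p0, q0, hF, h1, h2⟩)
      · exact hbmP p _ rfl (Or.inl h)
      · cases Sum.inl.inj h1
        cases Sum.inl.inj (Sum.inr.inj h2)
        exact hbmP p _ rfl (Or.inr hF)
    · intro h
      have h2 := h.2 (Sum.inr (Sum.inr (Sum.inr false))) rfl
      have h3 : T.lcaSet (Sum.inl p) (Sum.inr (Sum.inr (Sum.inr false))) ⊆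
          bigC l E1 p := lcaSet_subset T (hclP p) (l.le_refl p) mem_bigC_bool
      have h4 : E1 p q' := h3 (h2 (mem_lcaSet_right T _ _))
      rcases h4 with h4 | h4
      · exact Or.inl h4
      · exact Or.inr ⟨p, q', h4, rfl, rfl⟩
  -- (p, r')
  · refine iff_of_false ?_ (fun h => h.1 rfl)
    rintro (h | ⟨p0, q0, -, h1, h2⟩)
    · exact (h : False).elim
    · simp at h2
  -- (p, bool c')
  · cases c'
    · exact iff_of_true (Or.inl rfl) (hbmP p _ rfl mem_bigC_bool)
    · refine iff_of_false ?_ (fun h => h.1 rfl)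
      rintro (h | ⟨p0, q0, -, h1, h2⟩)
      · exact Bool.noConfusion (h : true = false)
      · simp at h2
  -- (q, p')
  · refine iff_of_false ?_ (hnbmQ q (Sum.inl p') rfl (by simp [pairQR]))
    rintro (h | ⟨p0, q0, -, h1, h2⟩)
    · exact (h : False).elim
    · simp at h1
  -- (q, q')
  · refine iff_of_false ?_ (fun h => h.1 rfl)
    rintro (h | ⟨p0, q0, -, h1, h2⟩)
    · exact (h : False).elim
    · simp at h1
  -- (q, r')
  · constructor
    · rintro (h | ⟨p0, q0, -, h1, h2⟩)
      · cases (h : q = q')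
        exact hbmQ q _ rfl (Or.inr rfl)
      · simp at h1
    · intro h
      by_cases hqq : q = q'
      · exact Or.inl hqq
      · exfalso
        refine hnbmQ q (Sum.inr (Sum.inr (Sum.inl q'))) rfl ?_ h
        rintro (h2 | h2)
        · simp at h2
        · exact hqq ((by simpa using h2 : q' = q)).symm
  -- (q, bool c')
  · cases c'
    · refine iff_of_false ?_ (fun h => h.1 rfl)
      rintro (h | ⟨p0, q0, -, h1, h2⟩)
      · exact (h : False).elim
      · simp at h1
    · refine iff_of_false ?_
        (hnbmQ q (Sum.inr (Sum.inr (Sum.inr true))) rfl (by simp [pairQR]))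
      rintro (h | ⟨p0, q0, -, h1, h2⟩)
      · exact (h : False).elim
      · simp at h1
  -- (r, p')
  · refine iff_of_false ?_ (fun h => h.1 rfl)
    rintro (h | ⟨p0, q0, -, h1, h2⟩)
    · exact (h : False).elim
    · simp at h1
  -- (r, q')
  · constructor
    · rintro (h | ⟨p0, q0, -, h1, h2⟩)
      · cases (h : q = q')
        exact hbmR q _ rfl (Or.inl rfl)
      · simp at h1
    · intro h
      by_cases hqq : q = q'
      · exact Or.inl hqq
      · exfalso
        refine hnbmR q (Sum.inr (Sum.inl q')) rfl ?_ h
        rintro (h2 | h2)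
        · exact hqq ((by simpa using h2 : q' = q)).symm
        · simp at h2
  -- (r, r')
  · refine iff_of_false ?_ (fun h => h.1 rfl)
    rintro (h | ⟨p0, q0, -, h1, h2⟩)
    · exact (h : False).elim
    · simp at h1
  -- (r, bool c')
  · cases c'
    · refine iff_of_false ?_
        (hnbmR q (Sum.inr (Sum.inr (Sum.inr false))) rfl (by simp [pairQR]))
      rintro (h | ⟨p0, q0, -, h1, h2⟩)
      · exact (h : False).elim
      · simp at h1
    · refine iff_of_false ?_ (fun h => h.1 rfl)
      rintro (h | ⟨p0, q0, -, h1, h2⟩)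
      · exact (h : False).elim
      · simp at h1
  -- (bool c, p')
  · cases c
    · refine iff_of_false ?_ (hnbmW (Sum.inl p') rfl (by simp [pairBW]))
      rintro (h | ⟨p0, q0, -, h1, h2⟩)
      · exact (h : False).elim
      · simp at h1
    · refine iff_of_false ?_ (fun h => h.1 rfl)
      rintro (h | ⟨p0, q0, -, h1, h2⟩)
      · exact (h : False).elim
      · simp at h1
  -- (bool c, q')
  · cases c
    · refine iff_of_false ?_ (fun h => h.1 rfl)
      rintro (h | ⟨p0, q0, -, h1, h2⟩)
      · exact (h : False).elim
      · simp at h1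
    · refine iff_of_false ?_ (hnbmB (Sum.inr (Sum.inl q')) rfl (by simp [pairBW]))
      rintro (h | ⟨p0, q0, -, h1, h2⟩)
      · exact (h : False).elim
      · simp at h1
  -- (bool c, r')
  · cases c
    · refine iff_of_false ?_
        (hnbmW (Sum.inr (Sum.inr (Sum.inl q'))) rfl (by simp [pairBW]))
      rintro (h | ⟨p0, q0, -, h1, h2⟩)
      · exact (h : False).elim
      · simp at h1
    · refine iff_of_false ?_ (fun h => h.1 rfl)
      rintro (h | ⟨p0, q0, -, h1, h2⟩)
      · exact (h : False).elim
      · simp at h1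
  -- (bool c, bool c')
  · by_cases hcc : c = c'
    · subst hcc
      refine iff_of_false ?_ (fun h => h.1 rfl)
      rintro (h | ⟨p0, q0, -, h1, h2⟩)
      · exact h rfl
      · simp at h1
    · exact iff_of_true (Or.inl hcc) (hbmBW c c' hcc)

end CGCProof
/-- For `F ⊆ P×Q`, the graph `(G+F,σ)` obtained from the CGC
reduction graph is a BMG iff `U' = (P ∪ Q, Ẽ ∪ F̃)` is a chain graph. -/
theorem cgc_reduction_bmg_iff_chain {P Q : Type}
    [Fintype P] [Fintype Q] [Nonempty P] [Nonempty Q]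
    (E0 : P → Q → Prop) (F : P → Q → Prop) :
    IsBMG
      (fun u v => cgcArcs E0 u v ∨
        (∃ (p : P) (q : Q), F p q ∧ u = Sum.inl p ∧ v = Sum.inr (Sum.inl q)))
      cgcColor ↔
    IsChainGraph (fun p q => E0 p q ∨ F p q) := by
  constructor
  · rintro ⟨T, hT⟩
    classical
    -- best-match consequences of the explanation
    have hGq : ∀ (p : P) (q : Q), (E0 p q ∨ F p q) →
        T.BestMatch cgcColor (Sum.inl p) (Sum.inr (Sum.inl q)) := by
      intro p q h
      refine (hT _ _).1 ?_
      rcases h with h | h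
      · exact Or.inl h
      · exact Or.inr ⟨p, q, h, rfl, rfl⟩
    have hGw : ∀ p : P,
        T.BestMatch cgcColor (Sum.inl p) (Sum.inr (Sum.inr (Sum.inr false))) :=
      fun p => (hT _ _).1 (Or.inl rfl)
    have hNq : ∀ (p : P) (q : Q), ¬(E0 p q ∨ F p q) →
        ¬ T.BestMatch cgcColor (Sum.inl p) (Sum.inr (Sum.inl q)) := by
      intro p q h hbm
      rcases (hT _ _).2 hbm with h' | ⟨p0, q0, hF, h1, h2⟩
      · exact h (Or.inl h')
      · cases Sum.inl.inj h1
        cases Sum.inl.inj (Sum.inr.inj h2)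
        exact h (Or.inr hF)
    -- neighborhoods are pairwise comparable
    have hcomp : ∀ u v : P, (∀ q, (E0 u q ∨ F u q) → (E0 v q ∨ F v q)) ∨
        (∀ q, (E0 v q ∨ F v q) → (E0 u q ∨ F u q)) := by
      intro u v
      by_contra hcon
      push_neg at hcon
      obtain ⟨⟨q, hq1, hq2⟩, ⟨q', hq'1, hq'2⟩⟩ := hcon
      have hbm1 := hGq u q hq1
      have hbm2 := hGq v q' hq'1
      -- A = lca(u, q) = lca(u, w),  A' = lca(v, q') = lca(v, w)
      have hA : T.lcaSet (Sum.inl u) (Sum.inr (Sum.inl q)) =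
          T.lcaSet (Sum.inl u) (Sum.inr (Sum.inr (Sum.inr false))) :=
        le_antisymm (hbm1.2 _ rfl) ((hGw u).2 _ rfl)
      have hA' : T.lcaSet (Sum.inl v) (Sum.inr (Sum.inl q')) =
          T.lcaSet (Sum.inl v) (Sum.inr (Sum.inr (Sum.inr false))) :=
        le_antisymm (hbm2.2 _ rfl) ((hGw v).2 _ rfl)
      have hsub1 : T.lcaSet (Sum.inl u) (Sum.inr (Sum.inl q)) ⊆
          T.lcaSet (Sum.inl u) (Sum.inr (Sum.inl q')) := hbm1.2 _ rfl
      have hsub2 : T.lcaSet (Sum.inl v) (Sum.inr (Sum.inl q')) ⊆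
          T.lcaSet (Sum.inl v) (Sum.inr (Sum.inl q)) := hbm2.2 _ rfl
      have hne1 : T.lcaSet (Sum.inl u) (Sum.inr (Sum.inl q)) ≠
          T.lcaSet (Sum.inl u) (Sum.inr (Sum.inl q')) := by
        intro he
        exact hNq u q' (not_or.2 hq'2) ⟨hbm1.1, fun y' hy' => he ▸ hbm1.2 y' hy'⟩
      have hne2 : T.lcaSet (Sum.inl v) (Sum.inr (Sum.inl q')) ≠
          T.lcaSet (Sum.inl v) (Sum.inr (Sum.inl q)) := by
        intro he
        exact hNq v q (not_or.2 hq2) ⟨hbm2.1, fun y' hy' => he ▸ hbm2.2 y' hy'⟩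
      have hAc := CGCProof.lcaSet_mem T (Sum.inl u) (Sum.inr (Sum.inl q))
      have hA'c := CGCProof.lcaSet_mem T (Sum.inl v) (Sum.inr (Sum.inl q'))
      have hwA : (Sum.inr (Sum.inr (Sum.inr false)) : CGCVert P Q) ∈
          T.lcaSet (Sum.inl u) (Sum.inr (Sum.inl q)) := by
        rw [hA]; exact CGCProof.mem_lcaSet_right T _ _
      have hwA' : (Sum.inr (Sum.inr (Sum.inr false)) : CGCVert P Q) ∈
          T.lcaSet (Sum.inl v) (Sum.inr (Sum.inl q')) := by
        rw [hA']; exact CGCProof.mem_lcaSet_right T _ _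
      rcases T.compat _ hAc _ hA'c with hsub | hsub | hdisj
      · -- A ⊆ A'
        have hqA' : (Sum.inr (Sum.inl q) : CGCVert P Q) ∈
            T.lcaSet (Sum.inl v) (Sum.inr (Sum.inl q')) :=
          hsub (CGCProof.mem_lcaSet_right T _ _)
        have hBsub : T.lcaSet (Sum.inl v) (Sum.inr (Sum.inl q)) ⊆
            T.lcaSet (Sum.inl v) (Sum.inr (Sum.inl q')) :=
          CGCProof.lcaSet_subset T hA'c (CGCProof.mem_lcaSet_left T _ _) hqA'
        exact hne2 (le_antisymm hsub2 hBsub)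
      · -- A' ⊆ A
        have hqA : (Sum.inr (Sum.inl q') : CGCVert P Q) ∈
            T.lcaSet (Sum.inl u) (Sum.inr (Sum.inl q)) :=
          hsub (CGCProof.mem_lcaSet_right T _ _)
        have hBsub : T.lcaSet (Sum.inl u) (Sum.inr (Sum.inl q')) ⊆
            T.lcaSet (Sum.inl u) (Sum.inr (Sum.inl q)) :=
          CGCProof.lcaSet_subset T hAc (CGCProof.mem_lcaSet_left T _ _) hqA
        exact hne1 (le_antisymm hsub1 hBsub)
      · have : (Sum.inr (Sum.inr (Sum.inr false)) : CGCVert P Q) ∈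
            T.lcaSet (Sum.inl u) (Sum.inr (Sum.inl q)) ∩
            T.lcaSet (Sum.inl v) (Sum.inr (Sum.inl q')) := ⟨hwA, hwA'⟩
        rw [hdisj] at this
        exact this
    -- build the linear order from the nested neighborhoods
    set Nf : P → Finset Q :=
      fun p => Finset.univ.filter (fun q => E0 p q ∨ F p q) with hNfdef
    have hNfmono : ∀ u v : P, (∀ q, (E0 u q ∨ F u q) → (E0 v q ∨ F v q)) →
        Nf u ⊆ Nf v := by
      intro u v h q hq
      rw [hNfdef] at hq ⊢
      simp only [Finset.mem_filter, Finset.mem_univ, true_and] at hq ⊢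
      exact h q hq
    set e := Fintype.equivFin P with hedef
    set k : P → ℕ ×ₗ Fin (Fintype.card P) :=
      fun p => toLex ((Nf p).card, e p) with hkdef
    have hinj : Function.Injective k := by
      intro a b hab
      have h2 : e a = e b := congrArg (fun x => (ofLex x).2) hab
      exact e.injective h2
    refine ⟨LinearOrder.lift' k hinj, ?_⟩
    intro u v huv q hq
    rcases hcomp u v with h | h
    · exact h q hq
    · have hsub := hNfmono v u h
      have hcard : (Nf v).card ≤ (Nf u).card := Finset.card_le_card hsub
      have hk : k u ≤ k v := huv
      have hle : (Nf u).card ≤ (Nf v).card := by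
        rcases Prod.Lex.le_iff.1 hk with h' | h'
        · exact le_of_lt h'
        · exact le_of_eq h'.1
      have heq : Nf v = Nf u := Finset.eq_of_subset_of_card_le hsub hle
      have hqu : q ∈ Nf u := by
        rw [hNfdef]
        simp only [Finset.mem_filter, Finset.mem_univ, true_and]
        exact hq
      have hqv : q ∈ Nf v := by rw [heq]; exact hqu
      rw [hNfdef] at hqv
      simp only [Finset.mem_filter, Finset.mem_univ, true_and] at hqv
      exact hqv
  · rintro ⟨l, hl⟩
    exact ⟨CGCProof.chainTree l _ hl, CGCProof.chain_explains E0 F l hl⟩
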